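/- In the privacy-constrained model, fix η > 0 and thresholds τ_1 ≥ ... ≥ τ_n > 0, and suppose the program minimizing σ²·Σᵢ wᵢ² + 2/η² subject to wᵢ·η ≤ τᵢ, Σᵢ wᵢ = 1, wᵢ ≥ 0 is feasible. Then any optimal solution w has the structure: there exists t ∈ {0,...,n} and W ≥ 0 with wᵢ = W for all i ≤ t and wᵢ = τᵢ/η for all i ≥ t+1. -/

import Mathlib

noncomputable section

/-- Feasibility for the privacy-constrained program at fixed noise `η`. -/
def FeasT {n : ℕ} (τ : Fin n → ℝ) (η : ℝ) (w : Fin n → ℝ) : Prop :=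
  (∀ i, w i * η ≤ τ i) ∧ (∑ i, w i = 1) ∧ (∀ i, 0 ≤ w i)

private lemma sum_two_diff {n : ℕ} {i j : Fin n} (hij : i ≠ j) (f g : Fin n → ℝ)
    (h : ∀ k, k ≠ i → k ≠ j → f k = g k) :
    ∑ k, f k = ∑ k, g k + (f i - g i) + (f j - g j) := by
  have h1 : ∑ k, (f k - g k) = ∑ k ∈ ({i, j} : Finset (Fin n)), (f k - g k) := by
    refine (Finset.sum_subset (Finset.subset_univ _) ?_).symm
    intro k _ hk
    simp only [Finset.mem_insert, Finset.mem_singleton] at hk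
    push_neg at hk
    rw [h k hk.1 hk.2]; ring
  have h2 : ∑ k ∈ ({i, j} : Finset (Fin n)), (f k - g k) = (f i - g i) + (f j - g j) :=
    Finset.sum_pair hij
  have h3 : ∑ k, (f k - g k) = ∑ k, f k - ∑ k, g k := Finset.sum_sub_distrib f g
  linarith [h1, h2, h3]

private lemma exchange {n : ℕ} {τ : Fin n → ℝ} {η σ2 : ℝ}
    (hη : 0 < η) (hσ2 : 0 < σ2)
    {w : Fin n → ℝ} (hfeas : FeasT τ η w)
    (hopt : ∀ v, FeasT τ η v →
      σ2 * ∑ i, (w i) ^ 2 + 2 / η ^ 2 ≤ σ2 * ∑ i, (v i) ^ 2 + 2 / η ^ 2)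
    {i j : Fin n} (hij : w i < w j) (hslack : w i * η < τ i) : False := by
  obtain ⟨hc, hs, hnn⟩ := hfeas
  have hne : j ≠ i := by
    intro h; rw [h] at hij; exact lt_irrefl _ hij
  have hineq : w i < τ i / η := (lt_div_iff₀ hη).mpr hslack
  set ε := min (τ i / η - w i) ((w j - w i) / 2) with hε
  have hε0 : 0 < ε := lt_min (by linarith) (by linarith)
  have hε1 : w i + ε ≤ τ i / η := by
    have := min_le_left (τ i / η - w i) ((w j - w i) / 2); linarith
  have hε2 : ε < w j - w i := by
    have := min_le_right (τ i / η - w i) ((w j - w i) / 2); linarith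
  set v : Fin n → ℝ := fun k => if k = i then w i + ε else if k = j then w j - ε else w k with hv
  have hvi : v i = w i + ε := by simp [hv]
  have hvj : v j = w j - ε := by simp [hv, hne]
  have hvk : ∀ k, k ≠ i → k ≠ j → v k = w k := by
    intro k h1 h2; simp [hv, h1, h2]
  have hine : i ≠ j := fun h => hne h.symm
  have hfv : FeasT τ η v := by
    refine ⟨?_, ?_, ?_⟩
    · intro k
      by_cases h1 : k = i
      · subst h1
        rw [hvi]
        calc (w k + ε) * η ≤ (τ k / η) * η := by
              exact mul_le_mul_of_nonneg_right hε1 hη.le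
          _ = τ k := div_mul_cancel₀ _ (ne_of_gt hη)
      · by_cases h2 : k = j
        · subst h2
          rw [hvj]
          calc (w k - ε) * η ≤ w k * η := by nlinarith
            _ ≤ τ k := hc k
        · rw [hvk k h1 h2]; exact hc k
    · have := sum_two_diff hine v w hvk
      rw [hvi, hvj] at this
      rw [this, hs]; ring
    · intro k
      by_cases h1 : k = i
      · subst h1; rw [hvi]; have := hnn k; linarith
      · by_cases h2 : k = j
        · subst h2; rw [hvj]; have := hnn i; linarith
        · rw [hvk k h1 h2]; exact hnn k
  have hsum : ∑ k, (v k) ^ 2 = ∑ k, (w k) ^ 2 + ((v i)^2 - (w i)^2) + ((v j)^2 - (w j)^2) :=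
    sum_two_diff hine (fun k => (v k)^2) (fun k => (w k)^2)
      (fun k h1 h2 => by rw [hvk k h1 h2])
  have hlt : ∑ k, (v k) ^ 2 < ∑ k, (w k) ^ 2 := by
    rw [hsum, hvi, hvj]
    nlinarith [hε0, hε2]
  have := hopt v hfv
  nlinarith [mul_lt_mul_of_pos_left hlt hσ2]

/-- Structure of the optimal solution of the privacy-constrained program at
fixed η > 0 with τ₁ ≥ ... ≥ τₙ > 0: there exist t ∈ {0,...,n} and W ≥ 0 with
wᵢ = W for the first t agents and wᵢ = τᵢ/η for the remaining agents. -/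
theorem pc_optimal_structure {n : ℕ} (τ : Fin n → ℝ) (σ2 η : ℝ)
    (hη : 0 < η) (hσ2 : 0 < σ2) (hτpos : ∀ i, 0 < τ i) (hτanti : Antitone τ)
    (hfeasible : ∃ v, FeasT τ η v)
    (w : Fin n → ℝ) (hfeas : FeasT τ η w)
    (hopt : ∀ v, FeasT τ η v →
      σ2 * ∑ i, (w i) ^ 2 + 2 / η ^ 2 ≤ σ2 * ∑ i, (v i) ^ 2 + 2 / η ^ 2) :
    ∃ (t : ℕ) (W : ℝ), t ≤ n ∧ 0 ≤ W ∧
      (∀ i : Fin n, (i : ℕ) < t → w i = W) ∧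
      (∀ i : Fin n, t ≤ (i : ℕ) → w i = τ i / η) := by
  classical
  obtain ⟨hc, hs, hnn⟩ := hfeas
  have hfeas' : FeasT τ η w := ⟨hc, hs, hnn⟩
  -- slack implies maximum weight
  have hslack_max : ∀ i, w i * η < τ i → ∀ j, w j ≤ w i := by
    intro i h j
    by_contra hlt
    push_neg at hlt
    exact exchange hη hσ2 hfeas' hopt hlt h
  -- weights are antitone
  have hanti : ∀ i j : Fin n, i ≤ j → w j ≤ w i := by
    intro i j hle
    by_contra hlt
    push_neg at hlt
    have h1 : w j ≤ τ j / η := (le_div_iff₀ hη).mpr (hc j)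
    have h2 : τ j ≤ τ i := hτanti hle
    have h3 : τ j / η ≤ τ i / η := by gcongr
    have hslack : w i * η < τ i := by
      have : w i < τ i / η := lt_of_lt_of_le hlt (le_trans h1 h3)
      exact (lt_div_iff₀ hη).mp this
    exact exchange hη hσ2 hfeas' hopt hlt hslack
  rcases Nat.eq_zero_or_pos n with hn | hn
  · subst hn
    exact ⟨0, 0, le_refl 0, le_refl 0, fun i _ => i.elim0, fun i _ => i.elim0⟩
  · set i0 : Fin n := ⟨0, hn⟩ with hi0
    set W := w i0 with hW
    have hmax : ∀ j, w j ≤ W := fun j => hanti i0 j (by simp [hi0, Fin.le_def])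
    have hdich : ∀ i, w i = W ∨ w i = τ i / η := by
      intro i
      rcases eq_or_lt_of_le (hc i) with heq | hlt
      · right
        field_simp [ne_of_gt hη] at heq ⊢
        linarith [heq]
      · left
        exact le_antisymm (hmax i) (hslack_max i hlt i0)
    have hex : ∃ k, k = n ∨ ∃ h : k < n, w ⟨k, h⟩ ≠ W := ⟨n, Or.inl rfl⟩
    set t := Nat.find hex with ht
    have ht_le : t ≤ n := Nat.find_le (Or.inl rfl)
    refine ⟨t, W, ht_le, hnn i0, ?_, ?_⟩
    · intro i hi
      have hmin := Nat.find_min hex hi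
      push_neg at hmin
      have := hmin.2 i.isLt
      simpa using this
    · intro i hi
      have htn : t < n := lt_of_le_of_lt hi i.isLt
      have hspec := Nat.find_spec hex
      rcases hspec with h | ⟨hlt, hne⟩
      · omega
      · set jt : Fin n := ⟨t, hlt⟩ with hjt
        have hwjt : w jt < W := lt_of_le_of_ne (hmax jt) hne
        have hle : w i ≤ w jt := hanti jt i (by simpa [hjt, Fin.le_def] using hi)
        have : w i ≠ W := by linarith
        rcases hdich i with h | h
        · exact absurd h this
        · exact h
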